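/- Let V be a pure vector configuration of rank r with dual degree 1. If C and D are distinct circuits of V with |C ∪ D| ≤ r+1, then C and D are disjoint. -/

import Mathlib

set_option maxHeartbeats 1000000

open Finset

namespace Stmt17

variable {r n : ℕ}

/-- dot pairing as a linear map in the second argument -/
noncomputable def dotL (w : Fin r → ℝ) : (Fin r → ℝ) →ₗ[ℝ] ℝ where
  toFun x := ∑ k, w k * x k
  map_add' x y := by simp [mul_add, Finset.sum_add_distrib]
  map_smul' c x := by
    simp only [Pi.smul_apply, smul_eq_mul, RingHom.id_apply, Finset.mul_sum]
    exact Finset.sum_congr rfl fun k _ => by ring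

lemma dotL_apply (w x : Fin r → ℝ) : dotL w x = ∑ k, w k * x k := rfl

def Dep (V : Fin n → Fin r → ℝ) (W : Submodule ℝ (Fin r → ℝ)) (c : Fin n → ℝ) : Prop :=
  (∑ i, c i • V i) ∈ W

def Mixed (c : Fin n → ℝ) : Prop := ∃ a b, 0 < c a ∧ c b < 0

def IsCirc (V : Fin n → Fin r → ℝ) (W : Submodule ℝ (Fin r → ℝ)) (M : Finset (Fin n))
    (μ : Fin n → ℝ) : Prop :=
  Dep V W μ ∧ (∀ i, μ i ≠ 0 ↔ i ∈ M) ∧ μ ≠ 0 ∧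
    ∀ c, Dep V W c → (∀ i, c i ≠ 0 → i ∈ M) → c = 0 ∨ ∀ i ∈ M, c i ≠ 0

def Indep (V : Fin n → Fin r → ℝ) (W : Submodule ℝ (Fin r → ℝ)) (E : Finset (Fin n)) : Prop :=
  ∀ c, Dep V W c → (∀ i, c i ≠ 0 → i ∈ E) → c = 0

lemma pair_zero {V : Fin n → Fin r → ℝ} {W : Submodule ℝ (Fin r → ℝ)} {w : Fin r → ℝ}
    {c : Fin n → ℝ} (hw : ∀ x ∈ W, dotL w x = 0) (hc : Dep V W c) :
    ∑ i, c i * dotL w (V i) = 0 := by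
  have h := hw _ hc
  rw [map_sum] at h
  simpa only [map_smul, smul_eq_mul] using h

lemma drop {V : Fin n → Fin r → ℝ} {W : Submodule ℝ (Fin r → ℝ)} {c : Fin n → ℝ}
    {T : Finset (Fin n)} {k : Fin n} (hc : Dep V W c) (hck : c k ≠ 0)
    (hsupp : ∀ i, c i ≠ 0 → i ∈ T) :
    V k ∈ W ⊔ Submodule.span ℝ (V '' ↑(T.erase k)) := by
  classical
  have hsum : ∑ i ∈ Finset.univ.erase k, c i • V i ∈ Submodule.span ℝ (V '' ↑(T.erase k)) := by
    refine Submodule.sum_mem _ fun i hi => ?_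
    rcases eq_or_ne (c i) 0 with h0 | h0
    · simp [h0]
    · refine Submodule.smul_mem _ _ (Submodule.subset_span ?_)
      exact Set.mem_image_of_mem V (by
        simp only [Finset.coe_erase, Set.mem_diff, Set.mem_singleton_iff]
        exact ⟨hsupp i h0, by simpa using (Finset.mem_erase.1 hi).1⟩)
  have hsplit : (∑ i, c i • V i) = c k • V k + ∑ i ∈ Finset.univ.erase k, c i • V i :=
    (Finset.add_sum_erase _ _ (Finset.mem_univ k)).symm
  have hmem : c k • V k ∈ W ⊔ Submodule.span ℝ (V '' ↑(T.erase k)) := by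
    have : c k • V k = (∑ i, c i • V i) - ∑ i ∈ Finset.univ.erase k, c i • V i := by
      rw [hsplit]; abel
    rw [this]
    exact sub_mem (Submodule.mem_sup_left hc) (Submodule.mem_sup_right hsum)
  have := Submodule.smul_mem _ (c k)⁻¹ hmem
  rwa [smul_smul, inv_mul_cancel₀ hck, one_smul] at this

lemma spanc {V : Fin n → Fin r → ℝ} {W : Submodule ℝ (Fin r → ℝ)} {T : Finset (Fin n)}
    {x : Fin n} (h : V x ∈ W ⊔ Submodule.span ℝ (V '' ↑T)) :
    ∃ c : Fin n → ℝ, (∀ i, c i ≠ 0 → i ∈ T) ∧ (V x - ∑ i, c i • V i) ∈ W := by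
  classical
  obtain ⟨w, hwW, y, hy, hsum⟩ := Submodule.mem_sup.1 h
  obtain ⟨l, hl, hly⟩ := (Finsupp.mem_span_image_iff_linearCombination ℝ).1 hy
  refine ⟨⇑l, ?_, ?_⟩
  · intro i hi
    have : i ∈ l.support := Finsupp.mem_support_iff.2 hi
    exact_mod_cast (Finsupp.mem_supported ℝ l).1 hl this
  · have hysum : (∑ i, l i • V i) = y := by
      rw [← hly, Finsupp.linearCombination_apply, Finsupp.sum_fintype]
      intro i; simp
    have : V x - ∑ i, l i • V i = w := by rw [hysum, ← hsum]; abel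
    rwa [this]

lemma sep {U : Submodule ℝ (Fin r → ℝ)} {x : Fin r → ℝ} (hx : x ∉ U) :
    ∃ w : Fin r → ℝ, (∀ y ∈ U, dotL w y = 0) ∧ dotL w x = 1 := by
  classical
  obtain ⟨f, hfx, hmap⟩ := U.exists_dual_map_eq_bot_of_notMem hx inferInstance
  have hf0 : ∀ y ∈ U, f y = 0 := by
    intro y hy
    have : f y ∈ U.map f := Submodule.mem_map_of_mem hy
    rwa [hmap, Submodule.mem_bot] at this
  have key : ∀ y : Fin r → ℝ, dotL (fun k => f (fun j => if k = j then 1 else 0)) y = f y := by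
    intro y
    conv_rhs => rw [pi_eq_sum_univ y]
    rw [map_sum, dotL_apply]
    exact Finset.sum_congr rfl fun k _ => by rw [map_smul]; simp [mul_comm]
  refine ⟨(f x)⁻¹ • fun k => f (fun j => if k = j then 1 else 0), fun y hy => ?_, ?_⟩
  · have : dotL ((f x)⁻¹ • fun k => f (fun j => if k = j then 1 else 0)) y
        = (f x)⁻¹ * dotL (fun k => f (fun j => if k = j then 1 else 0)) y := by
      rw [dotL_apply, dotL_apply, Finset.mul_sum]
      exact Finset.sum_congr rfl fun k _ => by simp [mul_assoc]
    rw [this, key, hf0 y hy, mul_zero]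
  · have : dotL ((f x)⁻¹ • fun k => f (fun j => if k = j then 1 else 0)) x
        = (f x)⁻¹ * dotL (fun k => f (fun j => if k = j then 1 else 0)) x := by
      rw [dotL_apply, dotL_apply, Finset.mul_sum]
      exact Finset.sum_congr rfl fun k _ => by simp [mul_assoc]
    rw [this, key, inv_mul_cancel₀ hfx]


lemma dep_sub {V : Fin n → Fin r → ℝ} {W : Submodule ℝ (Fin r → ℝ)} {z c : Fin n → ℝ}
    (hz : Dep V W z) (hc : Dep V W c) (t : ℝ) : Dep V W (fun i => z i - t * c i) := by
  have : (∑ i, (z i - t * c i) • V i)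
      = (∑ i, z i • V i) - t • (∑ i, c i • V i) := by
    rw [Finset.smul_sum, ← Finset.sum_sub_distrib]
    exact Finset.sum_congr rfl fun i _ => by rw [sub_smul, smul_smul]
  unfold Dep
  rw [this]
  exact sub_mem hz (Submodule.smul_mem _ _ hc)

lemma conf_aux {V : Fin n → Fin r → ℝ} {W : Submodule ℝ (Fin r → ℝ)} (N : ℕ) :
    ∀ z : Fin n → ℝ, (Finset.univ.filter (fun i => z i ≠ 0)).card ≤ N → Dep V W z → z ≠ 0 →
      ∃ M μ, IsCirc V W M μ ∧ ∀ i ∈ M, 0 < μ i * z i := by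
  classical
  induction N with
  | zero =>
    intro z hcard _ hz0
    exfalso
    apply hz0
    funext i
    by_contra hi
    have hi' : z i ≠ 0 := by simpa using hi
    have : i ∈ Finset.univ.filter (fun i => z i ≠ 0) := by simp [hi']
    have := Finset.card_pos.2 ⟨i, this⟩
    omega
  | succ N ih =>
    intro z hcard hdep hz0
    by_cases hmin : ∀ c, Dep V W c → (∀ i, c i ≠ 0 → z i ≠ 0) →
        c = 0 ∨ ∀ i, z i ≠ 0 → c i ≠ 0
    · refine ⟨Finset.univ.filter (fun i => z i ≠ 0), z, ⟨hdep, by intro i; simp, hz0, ?_⟩, ?_⟩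
      · intro c hc hsupp
        rcases hmin c hc (fun i hi => by simpa using hsupp i hi) with h | h
        · exact Or.inl h
        · exact Or.inr fun i hi => h i (by simpa using hi)
      · intro i hi
        have hzi : z i ≠ 0 := by simpa using hi
        exact mul_self_pos.2 hzi
    · push_neg at hmin
      obtain ⟨c, hcdep, hcsupp, hc0, i1, hzi1, hci1⟩ := hmin
      have hFc : (Finset.univ.filter (fun i => c i ≠ 0)).Nonempty := by
        by_contra h
        apply hc0
        funext i
        by_contra hi
        have hi' : c i ≠ 0 := by simpa using hi
        exact h ⟨i, by simp [hi']⟩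
      obtain ⟨istar, histar, hminim⟩ :=
        Finset.exists_min_image (Finset.univ.filter (fun i => c i ≠ 0))
          (fun i => |z i / c i|) hFc
      have hcistar : c istar ≠ 0 := by simpa using histar
      set t := z istar / c istar with ht
      set z' := fun i => z i - t * c i with hz'
      -- |t| ≤ |z i / c i| for any i with c i ≠ 0
      have htle : ∀ i, c i ≠ 0 → |t| ≤ |z i / c i| := fun i hi =>
        hminim i (by simp [hi])
      -- support of z' inside support of z
      have hsub : ∀ i, z i = 0 → z' i = 0 := by
        intro i hzi
        have hci : c i = 0 := by
          by_contra hci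
          exact (hcsupp i hci) hzi
        simp [hz', hzi, hci]
      -- sign preservation
      have hsign : ∀ i, 0 ≤ z' i * z i := by
        intro i
        rcases eq_or_ne (c i) 0 with hci | hci
        · simp only [hz', hci, mul_zero, sub_zero]
          exact mul_self_nonneg _
        · have hle := htle i hci
          set ρ := z i / c i with hρ
          have hzi : z i = c i * ρ := by rw [hρ]; field_simp
          have hz'i : z' i = c i * (ρ - t) := by
            simp only [hz']; rw [hzi]; ring
          have hkey : 0 ≤ (ρ - t) * ρ := by
            rcases le_or_gt 0 ρ with h | h
            · have : t ≤ ρ := le_trans (le_abs_self t) (le_trans hle (by rw [abs_of_nonneg h]))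
              nlinarith
            · have : ρ ≤ t := by
                have := neg_abs_le t
                have h2 : |ρ| = -ρ := abs_of_neg h
                nlinarith [htle i hci]
              nlinarith
          calc (0:ℝ) ≤ c i ^ 2 * ((ρ - t) * ρ) := by positivity
          _ = z' i * z i := by rw [hz'i, hzi]; ring
      have hz'istar : z' istar = 0 := by
        simp only [hz', ht]
        field_simp
        ring
      have hz'0 : z' ≠ 0 := by
        intro h
        have : z' i1 = 0 := by rw [h]; rfl
        simp only [hz', hci1, mul_zero, sub_zero] at this
        exact hzi1 this
      have hdep' : Dep V W z' := dep_sub hdep hcdep t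
      have hzistar : z istar ≠ 0 := by
        by_contra h
        exact (hcsupp istar hcistar) h
      have hcard' : (Finset.univ.filter (fun i => z' i ≠ 0)).card ≤ N := by
        have hss : Finset.univ.filter (fun i => z' i ≠ 0)
            ⊆ (Finset.univ.filter (fun i => z i ≠ 0)).erase istar := by
          intro i hi
          have hz'i : z' i ≠ 0 := by simpa using hi
          refine Finset.mem_erase.2 ⟨?_, ?_⟩
          · intro h; exact hz'i (h ▸ hz'istar)
          · simp only [Finset.mem_filter, Finset.mem_univ, true_and]
            intro h; exact hz'i (hsub i h)
        have h1 := Finset.card_le_card hss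
        have h2 : istar ∈ Finset.univ.filter (fun i => z i ≠ 0) := by simp [hzistar]
        have h3 := Finset.card_erase_of_mem h2
        omega
      obtain ⟨M, μ, hcirc, hconf⟩ := ih z' hcard' hdep' hz'0
      refine ⟨M, μ, hcirc, fun i hi => ?_⟩
      have h1 := hconf i hi
      have hz'i : z' i ≠ 0 := by
        intro h; rw [h, mul_zero] at h1; exact lt_irrefl _ h1
      have hzi : z i ≠ 0 := by
        intro h; exact hz'i (hsub i h)
      have h2 : 0 < z' i * z i := lt_of_le_of_ne (hsign i) (Ne.symm (mul_ne_zero hz'i hzi))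
      nlinarith [sq_nonneg (z' i)]

lemma conf {V : Fin n → Fin r → ℝ} {W : Submodule ℝ (Fin r → ℝ)} {z : Fin n → ℝ}
    (hdep : Dep V W z) (hz0 : z ≠ 0) :
    ∃ M μ, IsCirc V W M μ ∧ ∀ i ∈ M, 0 < μ i * z i :=
  conf_aux (Finset.univ.filter (fun i => z i ≠ 0)).card z le_rfl hdep hz0


lemma ext_indep (V : Fin n → Fin r → ℝ) (W : Submodule ℝ (Fin r → ℝ))
    {S' F₀ : Finset (Fin n)} (hF₀S : F₀ ⊆ S') (hF₀ : Indep V W F₀) :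
    ∃ E, F₀ ⊆ E ∧ E ⊆ S' ∧ Indep V W E ∧
      ∀ i ∈ S', V i ∈ W ⊔ Submodule.span ℝ (V '' ↑E) := by
  classical
  set CC := S'.powerset.filter (fun E => F₀ ⊆ E ∧ Indep V W E) with hCC
  have hne : CC.Nonempty := ⟨F₀, by simp [hCC, hF₀S, hF₀]⟩
  obtain ⟨E, hE, hEmax⟩ := Finset.exists_max_image CC Finset.card hne
  simp only [hCC, Finset.mem_filter, Finset.mem_powerset] at hE
  obtain ⟨hES, hF₀E, hEind⟩ := hE
  refine ⟨E, hF₀E, hES, hEind, ?_⟩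
  intro i hiS
  by_contra hnot
  have hiE : i ∉ E := by
    intro hiE
    exact hnot (Submodule.mem_sup_right (Submodule.subset_span
      (Set.mem_image_of_mem V (by exact_mod_cast hiE))))
  have hind' : Indep V W (insert i E) := by
    intro c hcdep hcsupp
    have hci : c i = 0 := by
      by_contra hci
      have := drop hcdep hci hcsupp
      rw [Finset.erase_insert hiE] at this
      exact hnot this
    refine hEind c hcdep ?_
    intro j hj
    rcases Finset.mem_insert.1 (hcsupp j hj) with h | h
    · exact absurd (h ▸ hj) (by simp [hci])
    · exact h
  have hmem : insert i E ∈ CC := by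
    simp only [hCC, Finset.mem_filter, Finset.mem_powerset]
    exact ⟨Finset.insert_subset hiS hES,
      hF₀E.trans (Finset.subset_insert _ _), hind'⟩
  have := hEmax _ hmem
  rw [Finset.card_insert_of_notMem hiE] at this
  omega

lemma elim_mixed {V : Fin n → Fin r → ℝ} {W : Submodule ℝ (Fin r → ℝ)}
    {M1 M2 : Finset (Fin n)} {μ1 μ2 : Fin n → ℝ} {i0 : Fin n}
    (h1 : IsCirc V W M1 μ1) (h2 : IsCirc V W M2 μ2) (hne : M1 ≠ M2)
    (hi01 : i0 ∈ M1) (hi02 : i0 ∈ M2) (hm1 : ¬ Mixed μ1) (hm2 : ¬ Mixed μ2) :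
    ∃ M μ, IsCirc V W M μ ∧ Mixed μ ∧ M ⊆ M1 ∪ M2 := by
  classical
  obtain ⟨hdep1, hsupp1, hne1, hmin1⟩ := h1
  obtain ⟨hdep2, hsupp2, hne2, hmin2⟩ := h2
  -- normalize signs so that coefficients are nonnegative
  have norm : ∀ (M : Finset (Fin n)) (μ : Fin n → ℝ), IsCirc V W M μ → ¬ Mixed μ → i0 ∈ M →
      ∃ ν, Dep V W ν ∧ (∀ i, ν i ≠ 0 ↔ i ∈ M) ∧ (∀ i, 0 ≤ ν i) ∧ 0 < ν i0 ∧
        (∀ c, Dep V W c → (∀ i, c i ≠ 0 → i ∈ M) → c = 0 ∨ ∀ i ∈ M, c i ≠ 0) := by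
    intro M μ hcirc hmix hi0
    obtain ⟨hdep, hsupp, hne0, hmin⟩ := hcirc
    have hi0ne : μ i0 ≠ 0 := (hsupp i0).2 hi0
    unfold Mixed at hmix
    push_neg at hmix
    rcases lt_or_gt_of_ne hi0ne with hneg | hpos
    · refine ⟨fun i => -μ i, ?_, ?_, ?_, ?_, hmin⟩
      · have : (∑ i, (fun i => -μ i) i • V i) = -(∑ i, μ i • V i) := by
          rw [← Finset.sum_neg_distrib]
          exact Finset.sum_congr rfl fun i _ => by rw [neg_smul]
        unfold Dep; rw [this]; exact neg_mem hdep
      · intro i; simpa using hsupp i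
      · intro i
        by_contra hlt
        push_neg at hlt
        have : 0 < μ i := by linarith
        have := hmix i i0 this
        linarith
      · simpa using hneg
    · refine ⟨μ, hdep, hsupp, ?_, hpos, hmin⟩
      intro i
      by_contra hlt
      push_neg at hlt
      have := hmix i0 i hpos
      linarith
  obtain ⟨ν1, hd1, hs1, hnn1, hp1, hm1'⟩ := norm M1 μ1 ⟨hdep1, hsupp1, hne1, hmin1⟩ hm1 hi01
  obtain ⟨ν2, hd2, hs2, hnn2, hp2, hm2'⟩ := norm M2 μ2 ⟨hdep2, hsupp2, hne2, hmin2⟩ hm2 hi02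
  set z := fun i => ν2 i0 * ν1 i - ν1 i0 * ν2 i with hz
  have hzdep : Dep V W z := by
    have e1 : (∑ i, z i • V i) = ν2 i0 • (∑ i, ν1 i • V i) - ν1 i0 • (∑ i, ν2 i • V i) := by
      rw [Finset.smul_sum, Finset.smul_sum, ← Finset.sum_sub_distrib]
      exact Finset.sum_congr rfl fun i _ => by
        rw [smul_smul, smul_smul, ← sub_smul]
    unfold Dep
    rw [e1]
    exact sub_mem (Submodule.smul_mem _ _ hd1) (Submodule.smul_mem _ _ hd2)
  have hzi0 : z i0 = 0 := by simp [hz]; ring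
  have hz0 : z ≠ 0 := by
    intro h
    apply hne
    ext i
    have hzi : ν2 i0 * ν1 i = ν1 i0 * ν2 i := by
      have : z i = 0 := by rw [h]; rfl
      simpa [hz, sub_eq_zero] using this
    constructor
    · intro hi
      have hν1 : ν1 i ≠ 0 := (hs1 i).2 hi
      have : ν1 i0 * ν2 i ≠ 0 := by
        rw [← hzi]
        exact mul_ne_zero (ne_of_gt hp2) hν1
      exact (hs2 i).1 fun h0 => this (by rw [h0, mul_zero])
    · intro hi
      have hν2 : ν2 i ≠ 0 := (hs2 i).2 hi
      have : ν2 i0 * ν1 i ≠ 0 := by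
        rw [hzi]
        exact mul_ne_zero (ne_of_gt hp1) hν2
      exact (hs1 i).1 fun h0 => this (by rw [h0, mul_zero])
  obtain ⟨M, μ, hcirc, hconf⟩ := conf hzdep hz0
  have hMsub : M ⊆ M1 ∪ M2 := by
    intro i hi
    have h1 := hconf i hi
    have hzi : z i ≠ 0 := by
      intro h; rw [h, mul_zero] at h1; exact lt_irrefl _ h1
    by_contra hiM
    rw [Finset.mem_union] at hiM
    push_neg at hiM
    have e1 : ν1 i = 0 := by
      by_contra h; exact hiM.1 ((hs1 i).1 h)
    have e2 : ν2 i = 0 := by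
      by_contra h; exact hiM.2 ((hs2 i).1 h)
    apply hzi; simp [hz, e1, e2]
  refine ⟨M, μ, hcirc, ?_, hMsub⟩
  -- μ must be mixed
  by_contra hmix
  obtain ⟨hdepμ, hsuppμ, hneμ, hminμ⟩ := hcirc
  unfold Mixed at hmix
  push_neg at hmix
  -- μ has constant sign on its support; wlog analysis
  have hsign : (∀ i ∈ M, 0 < μ i) ∨ (∀ i ∈ M, μ i < 0) := by
    by_cases hpos : ∃ i ∈ M, 0 < μ i
    · obtain ⟨a, haM, ha⟩ := hpos
      left
      intro i hiM
      have hne0 : μ i ≠ 0 := (hsuppμ i).2 hiM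
      rcases lt_or_gt_of_ne hne0 with h | h
      · linarith [hmix a i ha]
      · exact h
    · right
      intro i hiM
      have hne0 : μ i ≠ 0 := (hsuppμ i).2 hiM
      rcases lt_or_gt_of_ne hne0 with h | h
      · exact h
      · exact absurd ⟨i, hiM, h⟩ hpos
  have hi0nM : i0 ∉ M := by
    intro h
    have := hconf i0 h
    rw [hzi0, mul_zero] at this
    exact lt_irrefl _ this
  rcases hsign with hall | hall
  · -- z positive on M ⇒ M ⊆ M1 \ {i0}, contradicting minimality of M1
    have hMsub1 : ∀ i ∈ M, i ∈ M1 := by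
      intro i hiM
      have hzpos : 0 < z i := by
        have h1 := hconf i hiM
        have h2 := hall i hiM
        nlinarith
      have : ν1 i ≠ 0 := by
        intro h0
        have : z i = - (ν1 i0 * ν2 i) := by simp [hz, h0]
        have : z i ≤ 0 := by
          rw [this]
          have := hnn2 i
          nlinarith
        linarith
      exact (hs1 i).1 this
    rcases hm1' μ hdepμ (fun i hi => hMsub1 i ((hsuppμ i).1 hi)) with h | h
    · exact hneμ h
    · exact ((hsuppμ i0).1 (h i0 hi01)) |> fun hh => hi0nM hh
  · have hMsub2 : ∀ i ∈ M, i ∈ M2 := by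
      intro i hiM
      have hzneg : z i < 0 := by
        have h1 := hconf i hiM
        have h2 := hall i hiM
        nlinarith
      have : ν2 i ≠ 0 := by
        intro h0
        have : z i = ν2 i0 * ν1 i := by simp [hz, h0]
        have : 0 ≤ z i := by
          rw [this]
          have := hnn1 i
          nlinarith
        linarith
      exact (hs2 i).1 this
    rcases hm2' μ hdepμ (fun i hi => hMsub2 i ((hsuppμ i).1 hi)) with h | h
    · exact hneμ h
    · exact ((hsuppμ i0).1 (h i0 hi02)) |> fun hh => hi0nM hh


lemma half {V : Fin n → Fin r → ℝ} {W : Submodule ℝ (Fin r → ℝ)} {S' M : Finset (Fin n)}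
    {μ : Fin n → ℝ} (hMS : M ⊆ S') (hcirc : IsCirc V W M μ) (hmix : Mixed μ) :
    ∃ (w : Fin r → ℝ) (E T : Finset (Fin n)),
      (∀ x ∈ W, dotL w x = 0) ∧ T ⊆ S' ∧ T.card = E.card + 1 ∧
      (∀ i ∈ T, 0 < dotL w (V i)) ∧ (∀ i ∈ S', V i ∈ W ⊔ Submodule.span ℝ (V '' ↑E)) := by
  classical
  obtain ⟨hdep, hsupp, hne0, hmin⟩ := hcirc
  obtain ⟨a, b, ha, hb⟩ := hmix
  have hab : a ≠ b := by intro h; rw [h] at ha; linarith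
  have haM : a ∈ M := (hsupp a).1 (ne_of_gt ha)
  have hbM : b ∈ M := (hsupp b).1 (ne_of_lt hb)
  have haMb : a ∈ M.erase b := Finset.mem_erase.2 ⟨hab, haM⟩
  -- M.erase b is independent
  have hFind : Indep V W (M.erase b) := by
    intro c hcdep hcsupp
    rcases hmin c hcdep (fun i hi => Finset.mem_of_mem_erase (hcsupp i hi)) with h | h
    · exact h
    · exfalso
      have := hcsupp b (h b hbM)
      exact absurd this (Finset.notMem_erase b M)
  obtain ⟨E, hFE, hES, hEind, hEspan⟩ :=
    ext_indep V W ((Finset.erase_subset _ _).trans hMS) hFind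
  have hbE : b ∉ E := by
    intro hbE
    apply hne0
    refine hEind μ hdep ?_
    intro i hi
    rcases eq_or_ne i b with h | h
    · exact h ▸ hbE
    · exact hFE (Finset.mem_erase.2 ⟨h, (hsupp i).1 hi⟩)
  -- each element of E is not in the span of the others
  have hnotin : ∀ i ∈ E, V i ∉ W ⊔ Submodule.span ℝ (V '' ↑(E.erase i)) := by
    intro i hiE hin
    obtain ⟨c, hcsupp, hcmem⟩ := spanc hin
    set z := fun k => (if k = i then (1:ℝ) else 0) - c k with hzdef
    have hzdep : Dep V W z := by
      have e1 : (∑ k, z k • V k)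
          = (∑ k, (if k = i then (1:ℝ) else 0) • V k) - ∑ k, c k • V k := by
        rw [← Finset.sum_sub_distrib]
        exact Finset.sum_congr rfl fun k _ => by rw [sub_smul]
      have e2 : (∑ k, (if k = i then (1:ℝ) else 0) • V k) = V i := by
        simp [ite_smul]
      unfold Dep
      rw [e1, e2]
      exact hcmem
    have hz0 : z ≠ 0 := by
      intro h
      have hci : c i = 0 := by
        by_contra hci
        exact (Finset.notMem_erase i E) (hcsupp i hci)
      have : z i = 1 := by simp [hzdef, hci]
      rw [h] at this
      simpa using this
    apply hz0
    refine hEind z hzdep ?_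
    intro k hk
    rcases eq_or_ne k i with h | h
    · exact h ▸ hiE
    · have : c k ≠ 0 := by
        intro h0
        apply hk
        simp [hzdef, h, h0]
      exact Finset.mem_of_mem_erase (hcsupp k this)
  -- choose dual functionals
  have hch : ∀ i : Fin n, ∃ w : Fin r → ℝ, i ∈ E →
      ((∀ y ∈ W ⊔ Submodule.span ℝ (V '' ↑(E.erase i)), dotL w y = 0) ∧ dotL w (V i) = 1) := by
    intro i
    by_cases hiE : i ∈ E
    · obtain ⟨w, hw1, hw2⟩ := sep (hnotin i hiE)
      exact ⟨w, fun _ => ⟨hw1, hw2⟩⟩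
    · exact ⟨0, fun h => absurd h hiE⟩
  choose g hg using hch
  -- coefficients
  set cc : Fin n → ℝ :=
    fun i => if i = a then (1 + ∑ m ∈ (M.erase b).erase a, |μ m|) / μ a else 1 with hcc
  have hccpos : ∀ i, 0 < cc i := by
    intro i
    rcases eq_or_ne i a with h | h
    · have hnum : (0:ℝ) < 1 + ∑ m ∈ (M.erase b).erase a, |μ m| := by
        have : (0:ℝ) ≤ ∑ m ∈ (M.erase b).erase a, |μ m| :=
          Finset.sum_nonneg fun m _ => abs_nonneg _
        linarith
      simp only [hcc, h, if_pos rfl]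
      exact div_pos hnum ha
    · simp [hcc, h]
  set w : Fin r → ℝ := fun k => ∑ i ∈ E, cc i * g i k with hwdef
  have hdotw : ∀ x, dotL w x = ∑ i ∈ E, cc i * dotL (g i) x := by
    intro x
    rw [dotL_apply]
    have e1 : ∀ k, (∑ i ∈ E, cc i * g i k) * x k = ∑ i ∈ E, cc i * g i k * x k :=
      fun k => Finset.sum_mul _ _ _
    rw [Finset.sum_congr rfl fun k _ => e1 k, Finset.sum_comm]
    exact Finset.sum_congr rfl fun i _ => by
      rw [dotL_apply, Finset.mul_sum]
      exact Finset.sum_congr rfl fun k _ => by ring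
  have hwW : ∀ x ∈ W, dotL w x = 0 := by
    intro x hx
    rw [hdotw]
    refine Finset.sum_eq_zero fun i hi => ?_
    rw [(hg i hi).1 x (Submodule.mem_sup_left hx), mul_zero]
  have hwE : ∀ m ∈ E, dotL w (V m) = cc m := by
    intro m hm
    rw [hdotw]
    rw [Finset.sum_eq_single_of_mem m hm]
    · rw [(hg m hm).2, mul_one]
    · intro i hi hne
      have : V m ∈ W ⊔ Submodule.span ℝ (V '' ↑(E.erase i)) :=
        Submodule.mem_sup_right (Submodule.subset_span
          (Set.mem_image_of_mem V (by exact_mod_cast Finset.mem_erase.2 ⟨hne.symm, hm⟩)))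
      rw [(hg i hi).1 _ this, mul_zero]
  -- the value at b
  have hQ : (1:ℝ) ≤ ∑ i ∈ M.erase b, μ i * dotL w (V i) := by
    have hsum : ∑ i ∈ M.erase b, μ i * dotL w (V i)
        = μ a * cc a + ∑ i ∈ (M.erase b).erase a, μ i * dotL w (V i) := by
      rw [← Finset.add_sum_erase _ _ haMb]
      congr 1
      rw [hwE a (hFE haMb)]
    have hterm : ∀ i ∈ (M.erase b).erase a, μ i * dotL w (V i) = μ i := by
      intro i hi
      rw [hwE i (hFE (Finset.mem_of_mem_erase hi))]
      have : cc i = 1 := by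
        simp [hcc, (Finset.mem_erase.1 hi).1]
      rw [this, mul_one]
    have haval : μ a * cc a = 1 + ∑ m ∈ (M.erase b).erase a, |μ m| := by
      simp only [hcc, if_pos rfl]
      field_simp
    have hge : ∑ i ∈ (M.erase b).erase a, μ i * dotL w (V i)
        ≥ - ∑ m ∈ (M.erase b).erase a, |μ m| := by
      rw [Finset.sum_congr rfl hterm, ← Finset.sum_neg_distrib]
      exact Finset.sum_le_sum fun i _ => neg_abs_le (μ i)
    rw [hsum, haval]
    linarith
  have hbval : 0 < dotL w (V b) := by
    have hzero := pair_zero hwW hdep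
    have hsplit : ∑ i, μ i * dotL w (V i) = ∑ i ∈ M, μ i * dotL w (V i) := by
      symm
      apply Finset.sum_subset (Finset.subset_univ M)
      intro i _ hiM
      have : μ i = 0 := by
        by_contra h
        exact hiM ((hsupp i).1 h)
      rw [this, zero_mul]
    have hsplit2 : ∑ i ∈ M, μ i * dotL w (V i)
        = μ b * dotL w (V b) + ∑ i ∈ M.erase b, μ i * dotL w (V i) :=
      (Finset.add_sum_erase _ _ hbM).symm
    have : μ b * dotL w (V b) + ∑ i ∈ M.erase b, μ i * dotL w (V i) = 0 := by
      rw [← hsplit2, ← hsplit, hzero]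
    nlinarith
  refine ⟨w, E, insert b E, hwW, ?_, Finset.card_insert_of_notMem hbE, ?_, hEspan⟩
  · exact Finset.insert_subset (hMS hbM) hES
  · intro i hi
    rcases Finset.mem_insert.1 hi with h | h
    · exact h ▸ hbval
    · rw [hwE i h]
      exact hccpos i

lemma delta_dep {V : Fin n → Fin r → ℝ} {W : Submodule ℝ (Fin r → ℝ)} {T : Finset (Fin n)}
    {x : Fin n} {c : Fin n → ℝ} (hcsupp : ∀ i, c i ≠ 0 → i ∈ T) (hx : x ∉ T)
    (hmem : (V x - ∑ i, c i • V i) ∈ W) :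
    ∃ z : Fin n → ℝ, Dep V W z ∧ z x = 1 ∧ ∀ i, z i ≠ 0 → i = x ∨ i ∈ T := by
  classical
  refine ⟨fun k => (if k = x then (1:ℝ) else 0) - c k, ?_, ?_, ?_⟩
  · have e1 : (∑ k, ((if k = x then (1:ℝ) else 0) - c k) • V k)
        = (∑ k, (if k = x then (1:ℝ) else 0) • V k) - ∑ k, c k • V k := by
      rw [← Finset.sum_sub_distrib]
      exact Finset.sum_congr rfl fun k _ => by rw [sub_smul]
    have e2 : (∑ k, (if k = x then (1:ℝ) else 0) • V k) = V x := by
      simp [ite_smul]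
    unfold Dep
    rw [e1, e2]
    exact hmem
  · have hcx : c x = 0 := by
      by_contra h
      exact hx (hcsupp x h)
    simp [hcx]
  · intro i hi
    rcases eq_or_ne i x with h | h
    · exact Or.inl h
    · refine Or.inr (hcsupp i ?_)
      intro h0
      apply hi
      simp [h, h0]


end Stmt17

open Stmt17 in
/-- Let `V` be a pure vector configuration spanning `ℝ^r` with dual degree `1`. If `C` and
`D` are distinct circuits of `V` (supports of inclusion-minimal nonzero linear dependences)
with `|C ∪ D| ≤ r + 1`, then `C` and `D` are disjoint. -/
theorem stmt_17 (r n : ℕ) (V : Fin n → (Fin r → ℝ))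
    (hspan : Submodule.span ℝ (Set.range V) = ⊤)
    (hpure : ∀ w : Fin r → ℝ, w ≠ 0 →
      2 ≤ (Finset.univ.filter (fun i => 0 < ∑ k, w k * V i k)).card ∨
      2 ≤ (Finset.univ.filter (fun i => ∑ k, w k * V i k < 0)).card)
    (hdeg1 : ∀ w : Fin r → ℝ,
      (Finset.univ.filter (fun i => 0 < ∑ k, w k * V i k)).card ≤ r + 1)
    (hdeg2 : ∃ w : Fin r → ℝ, w ≠ 0 ∧
      (Finset.univ.filter (fun i => 0 < ∑ k, w k * V i k)).card = r + 1)
    (C : Finset (Fin n)) (lC : Fin n → ℝ) (hC : C.Nonempty)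
    (hsuppC : ∀ i, lC i ≠ 0 ↔ i ∈ C)
    (hdepC : ∑ i, lC i • V i = 0)
    (hminC : ∀ m : Fin n → ℝ, (∑ i, m i • V i = 0) → (∀ i, m i ≠ 0 → i ∈ C) →
      (m = 0 ∨ ∀ i ∈ C, m i ≠ 0))
    (D : Finset (Fin n)) (lD : Fin n → ℝ) (hD : D.Nonempty)
    (hsuppD : ∀ i, lD i ≠ 0 ↔ i ∈ D)
    (hdepD : ∑ i, lD i • V i = 0)
    (hminD : ∀ m : Fin n → ℝ, (∑ i, m i • V i = 0) → (∀ i, m i ≠ 0 → i ∈ D) →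
      (m = 0 ∨ ∀ i ∈ D, m i ≠ 0))
    (hne : C ≠ D) (hcard : (C ∪ D).card ≤ r + 1) :
    Disjoint C D := by
  classical
  by_contra hdisj
  rw [Finset.disjoint_left] at hdisj
  push_neg at hdisj
  obtain ⟨i0, hi0C, hi0D⟩ := hdisj
  set S := C ∪ D with hS
  have hCS : C ⊆ S := Finset.subset_union_left
  have hDS : D ⊆ S := Finset.subset_union_right
  have hlC0 : lC i0 ≠ 0 := (hsuppC i0).2 hi0C
  have hlD0 : lD i0 ≠ 0 := (hsuppD i0).2 hi0D
  have hCcirc : IsCirc V ⊥ C lC := by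
    refine ⟨?_, hsuppC, ?_, ?_⟩
    · show _ ∈ (⊥ : Submodule ℝ (Fin r → ℝ))
      rw [Submodule.mem_bot]; exact hdepC
    · intro h; rw [h] at hlC0; exact hlC0 rfl
    · intro c hc hs
      refine hminC c ?_ hs
      have hh := hc
      unfold Dep at hh
      rwa [Submodule.mem_bot] at hh
  have hDcirc : IsCirc V ⊥ D lD := by
    refine ⟨?_, hsuppD, ?_, ?_⟩
    · show _ ∈ (⊥ : Submodule ℝ (Fin r → ℝ))
      rw [Submodule.mem_bot]; exact hdepD
    · intro h; rw [h] at hlD0; exact hlD0 rfl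
    · intro c hc hs
      refine hminD c ?_ hs
      have hh := hc
      unfold Dep at hh
      rwa [Submodule.mem_bot] at hh
  set W := Submodule.span ℝ (V '' ↑S) with hW
  have hVS : ∀ i ∈ S, V i ∈ W := fun i hi =>
    Submodule.subset_span (Set.mem_image_of_mem V (by exact_mod_cast hi))
  -- the auxiliary dependence z
  set z : Fin n → ℝ := fun i => lD i0 * lC i - lC i0 * lD i with hzdef
  have hzdep : Dep V ⊥ z := by
    show _ ∈ (⊥ : Submodule ℝ (Fin r → ℝ))
    rw [Submodule.mem_bot]
    have e1 : (∑ i, z i • V i)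
        = lD i0 • (∑ i, lC i • V i) - lC i0 • (∑ i, lD i • V i) := by
      rw [Finset.smul_sum, Finset.smul_sum, ← Finset.sum_sub_distrib]
      exact Finset.sum_congr rfl fun i _ => by
        rw [smul_smul, smul_smul, ← sub_smul]
    rw [e1, hdepC, hdepD]; simp
  have hzi0 : z i0 = 0 := by simp [hzdef]; ring
  have hz0 : z ≠ 0 := by
    intro h
    apply hne
    ext i
    have hzi : lD i0 * lC i = lC i0 * lD i := by
      have : z i = 0 := by rw [h]; rfl
      simpa [hzdef, sub_eq_zero] using this
    constructor
    · intro hi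
      have h1 : lC i ≠ 0 := (hsuppC i).2 hi
      have h2 : lC i0 * lD i ≠ 0 := by rw [← hzi]; exact mul_ne_zero hlD0 h1
      exact (hsuppD i).1 fun h0 => h2 (by rw [h0, mul_zero])
    · intro hi
      have h1 : lD i ≠ 0 := (hsuppD i).2 hi
      have h2 : lD i0 * lC i ≠ 0 := by rw [hzi]; exact mul_ne_zero hlC0 h1
      exact (hsuppC i).1 fun h0 => h2 (by rw [h0, mul_zero])
  obtain ⟨i1, hzi1⟩ : ∃ i1, z i1 ≠ 0 := by
    by_contra h; push_neg at h; exact hz0 (funext h)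
  have hi1S : i1 ∈ S := by
    by_contra h
    have h1 : lC i1 = 0 := by by_contra hh; exact h (hCS ((hsuppC i1).1 hh))
    have h2 : lD i1 = 0 := by by_contra hh; exact h (hDS ((hsuppD i1).1 hh))
    exact hzi1 (by simp [hzdef, h1, h2])
  have hi1i0 : i1 ≠ i0 := fun h => hzi1 (h ▸ hzi0)
  have hi0S : i0 ∈ S := hCS hi0C
  have hsupz : ∀ i, z i ≠ 0 → i ∈ S.erase i0 := by
    intro i hi
    refine Finset.mem_erase.2 ⟨fun h => hi (h ▸ hzi0), ?_⟩
    by_contra h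
    have h1 : lC i = 0 := by by_contra hh; exact h (hCS ((hsuppC i).1 hh))
    have h2 : lD i = 0 := by by_contra hh; exact h (hDS ((hsuppD i).1 hh))
    exact hi (by simp [hzdef, h1, h2])
  have hsuplC : ∀ i, lC i ≠ 0 → i ∈ S := fun i hi => hCS ((hsuppC i).1 hi)
  set T0 := (S.erase i0).erase i1 with hT0
  have hWle : W ≤ Submodule.span ℝ (V '' ↑T0) := by
    have step1 : ∀ j ∈ S.erase i0, V j ∈ Submodule.span ℝ (V '' ↑T0) := by
      intro j hj
      rcases eq_or_ne j i1 with h | h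
      · subst h
        have hh := drop (W := (⊥ : Submodule ℝ (Fin r → ℝ))) hzdep hzi1 hsupz
        rw [bot_sup_eq] at hh
        exact hh
      · exact Submodule.subset_span (Set.mem_image_of_mem V (by
          exact_mod_cast Finset.mem_erase.2 ⟨h, hj⟩))
    rw [hW, Submodule.span_le]
    rintro xx ⟨i, hi, rfl⟩
    have hi' : i ∈ S := by exact_mod_cast hi
    rcases eq_or_ne i i0 with h | h
    · subst h
      have hh := drop (W := (⊥ : Submodule ℝ (Fin r → ℝ))) hCcirc.1 hlC0 hsuplC
      rw [bot_sup_eq] at hh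
      refine Submodule.span_le.2 ?_ hh
      rintro xx ⟨j, hj, rfl⟩
      exact step1 j (by exact_mod_cast hj)
    · exact step1 i (Finset.mem_erase.2 ⟨h, hi'⟩)
  have hcardT0 : T0.card + 2 = S.card := by
    have h2 : i1 ∈ S.erase i0 := Finset.mem_erase.2 ⟨hi1i0, hi1S⟩
    have e1 := Finset.card_erase_of_mem h2
    have e2 := Finset.card_erase_of_mem hi0S
    have p1 : 0 < S.card := Finset.card_pos.2 ⟨i0, hi0S⟩
    have p2 : 0 < (S.erase i0).card := Finset.card_pos.2 ⟨i1, h2⟩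
    rw [hT0]
    omega
  have hfr : Module.finrank ℝ W < r := by
    have h1 : Module.finrank ℝ W ≤ Module.finrank ℝ (Submodule.span ℝ (V '' ↑T0)) :=
      Submodule.finrank_mono hWle
    have h2 : Module.finrank ℝ (Submodule.span ℝ (V '' ↑T0)) ≤ T0.card := by
      have he : (V '' ↑T0) = ↑(T0.image V) := by rw [Finset.coe_image]
      rw [he]
      have h3 := finrank_span_finset_le_card (R := ℝ) (T0.image V)
      unfold Set.finrank at h3
      exact le_trans h3 Finset.card_image_le
    omega
  have hWtop : W ≠ ⊤ := by
    intro h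
    rw [h, finrank_top, Module.finrank_fin_fun] at hfr
    omega
  -- mixed circuit inside S
  obtain ⟨M1, μ1, hM1circ, hM1mix, hM1S⟩ :
      ∃ M1 μ1, IsCirc V ⊥ M1 μ1 ∧ Mixed μ1 ∧ M1 ⊆ S := by
    by_cases hCmix : Mixed lC
    · exact ⟨C, lC, hCcirc, hCmix, hCS⟩
    by_cases hDmix : Mixed lD
    · exact ⟨D, lD, hDcirc, hDmix, hDS⟩
    obtain ⟨M, μ, hc, hm, hsub⟩ := elim_mixed hCcirc hDcirc hne hi0C hi0D hCmix hDmix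
    exact ⟨M, μ, hc, hm, hsub⟩
  obtain ⟨f, E1, T1, _, hT1S, hT1card, hT1pos, hspanE1⟩ :=
    half (W := (⊥ : Submodule ℝ (Fin r → ℝ))) hM1S hM1circ hM1mix
  have hWE1 : W ≤ Submodule.span ℝ (V '' ↑E1) := by
    rw [hW, Submodule.span_le]
    rintro xx ⟨i, hi, rfl⟩
    have hh := hspanE1 i (by exact_mod_cast hi)
    rwa [bot_sup_eq] at hh
  by_cases HQ : ∃ M2 μ2, IsCirc V W M2 μ2 ∧ Mixed μ2
  · obtain ⟨M2, μ2, hM2circ, hM2mix⟩ := HQ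
    obtain ⟨u, E2, T2, huW, _, hT2card, hT2pos, hspanE2⟩ :=
      half (S' := Finset.univ) (Finset.subset_univ M2) hM2circ hM2mix
    have htop : Submodule.span ℝ (V '' ↑(E1 ∪ E2)) = ⊤ := by
      rw [eq_top_iff, ← hspan, Submodule.span_le]
      rintro xx ⟨i, rfl⟩
      have h1 := hspanE2 i (Finset.mem_univ i)
      have h2 : W ⊔ Submodule.span ℝ (V '' ↑E2)
          ≤ Submodule.span ℝ (V '' ↑E1) ⊔ Submodule.span ℝ (V '' ↑E2) :=
        sup_le_sup_right hWE1 _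
      have h3 : Submodule.span ℝ (V '' ↑E1) ⊔ Submodule.span ℝ (V '' ↑E2)
          = Submodule.span ℝ (V '' ↑(E1 ∪ E2)) := by
        rw [Finset.coe_union, Set.image_union, Submodule.span_union]
      exact h3 ▸ (h2 h1)
    have hrle : r ≤ E1.card + E2.card := by
      have h3 := finrank_span_finset_le_card (R := ℝ) ((E1 ∪ E2).image V)
      unfold Set.finrank at h3
      have he : (V '' ↑(E1 ∪ E2)) = ↑((E1 ∪ E2).image V) := by rw [Finset.coe_image]
      rw [← he, htop, finrank_top, Module.finrank_fin_fun] at h3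
      have h4 : ((E1 ∪ E2).image V).card ≤ (E1 ∪ E2).card := Finset.card_image_le
      have h5 : (E1 ∪ E2).card ≤ E1.card + E2.card := Finset.card_union_le _ _
      omega
    have hT2ne : T2.Nonempty := Finset.card_pos.1 (by omega)
    set ε := T2.inf' hT2ne (fun i => dotL u (V i) / (1 + |dotL f (V i)|)) with hε
    have hεpos : 0 < ε := by
      rw [hε, Finset.lt_inf'_iff]
      intro i hi
      exact div_pos (hT2pos i hi) (by positivity)
    set w := fun k => u k + ε * f k with hw
    have hdotw : ∀ x, dotL w x = dotL u x + ε * dotL f x := by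
      intro x
      rw [dotL_apply, dotL_apply, dotL_apply, Finset.mul_sum, ← Finset.sum_add_distrib]
      exact Finset.sum_congr rfl fun k _ => by simp only [hw]; ring
    have hposT1 : ∀ i ∈ T1, 0 < dotL w (V i) := by
      intro i hi
      have h0 : dotL u (V i) = 0 := huW _ (hVS i (hT1S hi))
      rw [hdotw, h0, zero_add]
      exact mul_pos hεpos (hT1pos i hi)
    have hposT2 : ∀ i ∈ T2, 0 < dotL w (V i) := by
      intro i hi
      have h1 : ε ≤ dotL u (V i) / (1 + |dotL f (V i)|) := Finset.inf'_le _ hi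
      have h2 : (0:ℝ) < 1 + |dotL f (V i)| := by positivity
      have h3 : ε * (1 + |dotL f (V i)|) ≤ dotL u (V i) := by
        rw [← le_div_iff₀ h2]
        exact h1
      have h4 := neg_abs_le (dotL f (V i))
      have h5 := abs_nonneg (dotL f (V i))
      rw [hdotw]
      nlinarith
    have hdisjT : Disjoint T1 T2 := by
      rw [Finset.disjoint_left]
      intro i hi1 hi2
      have h0 : dotL u (V i) = 0 := huW _ (hVS i (hT1S hi1))
      have hh := hT2pos i hi2
      rw [h0] at hh
      exact lt_irrefl _ hh
    have hsubfilter : T1 ∪ T2 ⊆ Finset.univ.filter (fun i => 0 < ∑ k, w k * V i k) := by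
      intro i hi
      simp only [Finset.mem_filter, Finset.mem_univ, true_and]
      rw [← dotL_apply]
      rcases Finset.mem_union.1 hi with h | h
      exacts [hposT1 i h, hposT2 i h]
    have hcount := hdeg1 w
    have hcu := Finset.card_le_card hsubfilter
    rw [Finset.card_union_of_disjoint hdisjT] at hcu
    omega
  · push_neg at HQ
    set Bset := Finset.univ.filter (fun i => V i ∉ W) with hBset
    have hBmem : ∀ i, i ∈ Bset ↔ V i ∉ W := by
      intro i; simp [hBset]
    by_cases hB : Bset = ∅
    · apply hWtop
      rw [eq_top_iff, ← hspan, Submodule.span_le]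
      rintro xx ⟨i, rfl⟩
      by_contra h
      have hh : i ∈ Bset := (hBmem i).2 h
      rw [hB] at hh
      simp at hh
    · obtain ⟨e0, he0⟩ := Finset.nonempty_of_ne_empty hB
      by_cases hc1 : ∃ e ∈ Bset, V e ∉ W ⊔ Submodule.span ℝ (V '' ↑(Bset.erase e))
      · obtain ⟨e, heB, hnot⟩ := hc1
        obtain ⟨w, hwU, hwe⟩ := sep hnot
        have hw0 : w ≠ 0 := by
          intro h
          rw [h] at hwe
          simp [dotL_apply] at hwe
        have hzero : ∀ i, i ≠ e → dotL w (V i) = 0 := by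
          intro i hi
          by_cases hiB : i ∈ Bset
          · exact hwU _ (Submodule.mem_sup_right (Submodule.subset_span
              (Set.mem_image_of_mem V (by exact_mod_cast Finset.mem_erase.2 ⟨hi, hiB⟩))))
          · have hiW : V i ∈ W := by
              by_contra h
              exact hiB ((hBmem i).2 h)
            exact hwU _ (Submodule.mem_sup_left hiW)
        rcases hpure w hw0 with h | h
        · have hsub : Finset.univ.filter (fun i => 0 < ∑ k, w k * V i k) ⊆ {e} := by
            intro i hi
            simp only [Finset.mem_filter, Finset.mem_univ, true_and] at hi
            rw [Finset.mem_singleton]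
            by_contra hie
            have hh := hzero i hie
            rw [dotL_apply] at hh
            linarith
          have hcle := Finset.card_le_card hsub
          rw [Finset.card_singleton] at hcle
          omega
        · have hsub : Finset.univ.filter (fun i => ∑ k, w k * V i k < 0) ⊆ {e} := by
            intro i hi
            simp only [Finset.mem_filter, Finset.mem_univ, true_and] at hi
            rw [Finset.mem_singleton]
            by_contra hie
            have hh := hzero i hie
            rw [dotL_apply] at hh
            linarith
          have hcle := Finset.card_le_card hsub
          rw [Finset.card_singleton] at hcle
          omega
      · push_neg at hc1
        obtain ⟨c0, hc0supp, hc0mem⟩ := spanc (hc1 e0 he0)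
        obtain ⟨z0, hz0dep, hz0e0, hz0supp⟩ :=
          delta_dep hc0supp (Finset.notMem_erase e0 Bset) hc0mem
        have hz0ne : z0 ≠ 0 := by
          intro h
          rw [h] at hz0e0
          simpa using hz0e0
        obtain ⟨M, μM, hMcirc, hMconf⟩ := conf hz0dep hz0ne
        obtain ⟨hMdep, hMsupp, hMne, hMmin⟩ := hMcirc
        have hMB : ∀ i ∈ M, i ∈ Bset := by
          intro i hi
          have h1 := hMconf i hi
          have hz0i : z0 i ≠ 0 := by
            intro hh
            rw [hh, mul_zero] at h1
            exact lt_irrefl _ h1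
          rcases hz0supp i hz0i with h | h
          · exact h ▸ he0
          · exact Finset.mem_of_mem_erase h
        have hMnomix : ¬ Mixed μM := HQ M μM ⟨hMdep, hMsupp, hMne, hMmin⟩
        obtain ⟨k0, hk0⟩ : ∃ k, μM k ≠ 0 := by
          by_contra h; push_neg at h; exact hMne (funext h)
        have hk0M : k0 ∈ M := (hMsupp k0).1 hk0
        have hM2 : 1 < M.card := by
          rcases Nat.lt_or_ge 1 M.card with h | h
          · exact h
          · exfalso
            have hcard1 : M.card = 1 := le_antisymm h (Finset.card_pos.2 ⟨k0, hk0M⟩)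
            obtain ⟨x, hx⟩ := Finset.card_eq_one.1 hcard1
            have hxM : x ∈ M := hx ▸ Finset.mem_singleton_self x
            have hsum : (∑ i, μM i • V i) = μM x • V x := by
              rw [Finset.sum_eq_single_of_mem x (Finset.mem_univ x)]
              intro i _ hne'
              have hh : μM i = 0 := by
                by_contra hhh
                have := (hMsupp i).1 hhh
                rw [hx] at this
                exact hne' (by simpa using this)
              rw [hh, zero_smul]
            have hμx : μM x ≠ 0 := (hMsupp x).2 hxM
            have hVx : V x ∈ W := by
              have h1 : μM x • V x ∈ W := by rw [← hsum]; exact hMdep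
              have h2 := Submodule.smul_mem W (μM x)⁻¹ h1
              rwa [smul_smul, inv_mul_cancel₀ hμx, one_smul] at h2
            exact ((hBmem x).1 (hMB x hxM)) hVx
        obtain ⟨x, hxM, y, hyM, hxy⟩ := Finset.one_lt_card.1 hM2
        have hxB : x ∈ Bset := hMB x hxM
        have hyB : y ∈ Bset := hMB y hyM
        have hkey : V x ∉ W ⊔ Submodule.span ℝ (V '' ↑((Bset.erase x).erase y)) := by
          intro hin
          set TT : Finset (Finset (Fin n)) := Finset.filter
            (fun T => V x ∈ W ⊔ Submodule.span ℝ (V '' (T : Set (Fin n))))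
            (Finset.powerset ((Bset.erase x).erase y)) with hTT
          have hTTmem0 : ((Bset.erase x).erase y) ∈ TT := by
            rw [hTT, Finset.mem_filter, Finset.mem_powerset]
            exact ⟨Finset.Subset.refl _, hin⟩
          have hTTne : TT.Nonempty := ⟨_, hTTmem0⟩
          obtain ⟨T, hT, hTmin⟩ := Finset.exists_min_image TT Finset.card hTTne
          simp only [hTT, Finset.mem_filter, Finset.mem_powerset] at hT
          obtain ⟨hTsub, hTmem⟩ := hT
          have hxT : x ∉ T := by
            intro h
            have h1 := hTsub h
            have h2 := Finset.mem_of_mem_erase h1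
            exact (Finset.notMem_erase x Bset) h2
          obtain ⟨c', hc'supp, hc'mem⟩ := spanc hTmem
          obtain ⟨z', hz'dep, hz'x, hz'supp⟩ := delta_dep hc'supp hxT hc'mem
          have hz'ne : z' ≠ 0 := by
            intro h
            rw [h] at hz'x
            simpa using hz'x
          obtain ⟨M', μ', hM'circ, hM'conf⟩ := conf hz'dep hz'ne
          obtain ⟨hM'dep, hM'supp, hM'ne, hM'min⟩ := hM'circ
          have hsupz' : ∀ i ∈ M', i = x ∨ i ∈ T := by
            intro i hi
            have h1 := hM'conf i hi
            have hzz : z' i ≠ 0 := by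
              intro hh
              rw [hh, mul_zero] at h1
              exact lt_irrefl _ h1
            exact hz'supp i hzz
          have hxM' : x ∈ M' := by
            by_contra hxM'
            have hM'T : ∀ i, μ' i ≠ 0 → i ∈ T := by
              intro i hi
              rcases hsupz' i ((hM'supp i).1 hi) with h | h
              · exact absurd (h ▸ (hM'supp i).1 hi) hxM'
              · exact h
            obtain ⟨a, ha⟩ : ∃ a, μ' a ≠ 0 := by
              by_contra h; push_neg at h; exact hM'ne (funext h)
            have haT : a ∈ T := hM'T a ha
            have hdropa := drop hM'dep ha hM'T
            have hle : W ⊔ Submodule.span ℝ (V '' ↑T)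
                ≤ W ⊔ Submodule.span ℝ (V '' ↑(T.erase a)) := by
              refine sup_le le_sup_left ?_
              rw [Submodule.span_le]
              rintro xx ⟨j, hj, rfl⟩
              have hj' : j ∈ T := by exact_mod_cast hj
              rcases eq_or_ne j a with h | h
              · rw [h]; exact hdropa
              · exact Submodule.mem_sup_right (Submodule.subset_span
                  (Set.mem_image_of_mem V (by exact_mod_cast Finset.mem_erase.2 ⟨h, hj'⟩)))
            have hmem' : T.erase a ∈ TT := by
              simp only [hTT, Finset.mem_filter, Finset.mem_powerset]
              exact ⟨(Finset.erase_subset _ _).trans hTsub, hle hTmem⟩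
            have h1 := hTmin _ hmem'
            have h2 := Finset.card_erase_of_mem haT
            have h3 : 0 < T.card := Finset.card_pos.2 ⟨a, haT⟩
            omega
          have hyM' : y ∉ M' := by
            intro h
            rcases hsupz' y h with hh | hh
            · exact hxy hh.symm
            · have h1 := hTsub hh
              exact (Finset.notMem_erase y (Bset.erase x)) h1
          have hMneM' : M ≠ M' := fun h => hyM' (h ▸ hyM)
          have hM'nomix : ¬ Mixed μ' := HQ M' μ' ⟨hM'dep, hM'supp, hM'ne, hM'min⟩
          obtain ⟨Mm, μm, hmc, hmm, _⟩ :=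
            elim_mixed ⟨hMdep, hMsupp, hMne, hMmin⟩ ⟨hM'dep, hM'supp, hM'ne, hM'min⟩
              hMneM' hxM hxM' hMnomix hM'nomix
          exact HQ Mm μm hmc hmm
        obtain ⟨w, hwU, hwx⟩ := sep hkey
        have hw0 : w ≠ 0 := by
          intro h
          rw [h] at hwx
          simp [dotL_apply] at hwx
        have hwW : ∀ xx ∈ W, dotL w xx = 0 := fun xx hxx => hwU xx (Submodule.mem_sup_left hxx)
        have hzero : ∀ i, i ≠ x → i ≠ y → dotL w (V i) = 0 := by
          intro i hix hiy
          by_cases hiB : i ∈ Bset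
          · exact hwU _ (Submodule.mem_sup_right (Submodule.subset_span
              (Set.mem_image_of_mem V (by
                exact_mod_cast Finset.mem_erase.2 ⟨hiy, Finset.mem_erase.2 ⟨hix, hiB⟩⟩))))
          · have hiW : V i ∈ W := by
              by_contra h
              exact hiB ((hBmem i).2 h)
            exact hwW _ hiW
        have hpairing := pair_zero hwW hMdep
        have hySplit : μM x + μM y * dotL w (V y) = 0 := by
          have h1 : ∑ i, μM i * dotL w (V i) = ∑ i ∈ M, μM i * dotL w (V i) := by
            symm
            apply Finset.sum_subset (Finset.subset_univ M)
            intro i _ hiM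
            have hh : μM i = 0 := by
              by_contra hhh
              exact hiM ((hMsupp i).1 hhh)
            rw [hh, zero_mul]
          have h2 : ∑ i ∈ M, μM i * dotL w (V i)
              = μM x * dotL w (V x) + ∑ i ∈ M.erase x, μM i * dotL w (V i) :=
            (Finset.add_sum_erase _ _ hxM).symm
          have hyMx : y ∈ M.erase x := Finset.mem_erase.2 ⟨Ne.symm hxy, hyM⟩
          have h3 : ∑ i ∈ M.erase x, μM i * dotL w (V i)
              = μM y * dotL w (V y) + ∑ i ∈ (M.erase x).erase y, μM i * dotL w (V i) :=
            (Finset.add_sum_erase _ _ hyMx).symm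
          have h4 : ∑ i ∈ (M.erase x).erase y, μM i * dotL w (V i) = 0 := by
            apply Finset.sum_eq_zero
            intro i hi
            have hix : i ≠ x := (Finset.mem_erase.1 (Finset.mem_of_mem_erase hi)).1
            have hiy : i ≠ y := (Finset.mem_erase.1 hi).1
            rw [hzero i hix hiy, mul_zero]
          rw [h1, h2, h3, h4, hwx] at hpairing
          linarith
        have hμx : μM x ≠ 0 := (hMsupp x).2 hxM
        have hμy : μM y ≠ 0 := (hMsupp y).2 hyM
        have hsignxy : 0 < μM x * μM y := by
          unfold Mixed at hMnomix
          push_neg at hMnomix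
          rcases lt_or_gt_of_ne hμx with h | h
          · rcases lt_or_gt_of_ne hμy with h2 | h2
            · nlinarith
            · have := hMnomix y x h2
              linarith
          · rcases lt_or_gt_of_ne hμy with h2 | h2
            · have := hMnomix x y h
              linarith
            · nlinarith
        have hdvy : dotL w (V y) < 0 := by
          by_contra hge
          push_neg at hge
          have h6 : μM x * μM y + μM y * μM y * dotL w (V y) = 0 := by
            linear_combination μM y * hySplit
          have h8 : 0 ≤ μM y * μM y * dotL w (V y) :=
            mul_nonneg (mul_self_nonneg _) hge
          linarith
        rcases hpure w hw0 with h | h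
        · have hsub : Finset.univ.filter (fun i => 0 < ∑ k, w k * V i k) ⊆ {x} := by
            intro i hi
            simp only [Finset.mem_filter, Finset.mem_univ, true_and] at hi
            rw [Finset.mem_singleton]
            by_contra hix
            rcases eq_or_ne i y with hiy | hiy
            · rw [hiy] at hi
              have hh := hdvy
              rw [dotL_apply] at hh
              linarith
            · have hh := hzero i hix hiy
              rw [dotL_apply] at hh
              linarith
          have hcle := Finset.card_le_card hsub
          rw [Finset.card_singleton] at hcle
          omega
        · have hsub : Finset.univ.filter (fun i => ∑ k, w k * V i k < 0) ⊆ {y} := by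
            intro i hi
            simp only [Finset.mem_filter, Finset.mem_univ, true_and] at hi
            rw [Finset.mem_singleton]
            by_contra hiy
            rcases eq_or_ne i x with hix | hix
            · rw [hix] at hi
              have hh := hwx
              rw [dotL_apply] at hh
              linarith
            · have hh := hzero i hix hiy
              rw [dotL_apply] at hh
              linarith
          have hcle := Finset.card_le_card hsub
          rw [Finset.card_singleton] at hcle
          omega
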